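/- Let V : [0,∞) → ℝ solve the scalar ODE V' = -k₁ V^(1-1/μ) - k₂ V^(1+1/μ) with k₁, k₂ > 0, μ > 1, and initial condition V(0) > 0. Then V reaches 0 at a time T satisfying T ≤ μπ/(2√(k₁k₂)). -/

import Mathlib

/-- Fixed-time settling bound for the scalar ODE
`V' = -k₁ V^(1-1/μ) - k₂ V^(1+1/μ)` with `k₁, k₂ > 0`, `μ > 1`, `V(0) > 0`:
`V` reaches `0` at some time `T ≤ μπ/(2√(k₁k₂))`. -/
theorem stmt_0 (k₁ k₂ μ : ℝ) (hk₁ : 0 < k₁) (hk₂ : 0 < k₂) (hμ : 1 < μ)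
    (V : ℝ → ℝ) (hV0 : 0 < V 0) (hVnn : ∀ t, 0 ≤ t → 0 ≤ V t)
    (hODE : ∀ t, 0 ≤ t →
      HasDerivAt V (-k₁ * V t ^ (1 - 1/μ) - k₂ * V t ^ (1 + 1/μ)) t) :
    ∃ T, 0 ≤ T ∧ T ≤ μ * Real.pi / (2 * Real.sqrt (k₁ * k₂)) ∧ V T = 0 := by
  by_contra hcon
  push_neg at hcon
  have hμ0 : (0:ℝ) < μ := lt_trans one_pos hμ
  have hs1 : (0:ℝ) < Real.sqrt k₁ := Real.sqrt_pos.mpr hk₁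
  have hs2 : (0:ℝ) < Real.sqrt k₂ := Real.sqrt_pos.mpr hk₂
  set c : ℝ := Real.sqrt k₂ / Real.sqrt k₁ with hc
  set s : ℝ := Real.sqrt k₁ * Real.sqrt k₂ / μ with hs
  set T : ℝ := μ * Real.pi / (2 * Real.sqrt (k₁ * k₂)) with hT
  clear_value c s T
  have hcpos : 0 < c := by rw [hc]; exact div_pos hs2 hs1
  have hsq : Real.sqrt (k₁ * k₂) = Real.sqrt k₁ * Real.sqrt k₂ := Real.sqrt_mul hk₁.le k₂
  have hTpos : 0 < T := by
    rw [hT]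
    positivity
  have hsT : s * T = Real.pi / 2 := by
    rw [hs, hT, hsq]
    field_simp
  have hpos : ∀ t ∈ Set.Icc (0:ℝ) T, 0 < V t := fun t ht =>
    (hVnn t ht.1).lt_of_ne' (hcon t ht.1 ht.2)
  have hck : c * k₁ = Real.sqrt k₁ * Real.sqrt k₂ := by
    rw [hc]
    field_simp
    nlinarith [Real.mul_self_sqrt hk₁.le]
  -- define the Lyapunov-like function
  set f : ℝ → ℝ := fun u => Real.arctan (c * V u ^ ((1:ℝ)/μ)) + s * u with hf
  clear_value f
  have hderiv : ∀ t ∈ Set.Icc (0:ℝ) T, HasDerivAt f 0 t := by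
    intro t ht
    have hv : 0 < V t := hpos t ht
    have h1 := hODE t ht.1
    have h2 : HasDerivAt (fun u => V u ^ ((1:ℝ)/μ))
        ((-k₁ * V t ^ (1 - 1/μ) - k₂ * V t ^ (1 + 1/μ)) * ((1:ℝ)/μ) * V t ^ ((1:ℝ)/μ - 1)) t :=
      h1.rpow_const (Or.inl hv.ne')
    have h3 := h2.const_mul c
    have h4 := (Real.hasDerivAt_arctan (c * V t ^ ((1:ℝ)/μ))).comp t h3
    have h5 := h4.add ((hasDerivAt_id t).const_mul s)
    have h6 : HasDerivAt f
        ((1 / (1 + (c * V t ^ ((1:ℝ)/μ)) ^ 2)) *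
          (c * ((-k₁ * V t ^ (1 - 1/μ) - k₂ * V t ^ (1 + 1/μ)) * ((1:ℝ)/μ) * V t ^ ((1:ℝ)/μ - 1)))
          + s * 1) t := by
      simpa [hf, Function.comp_def, Pi.add_def] using h5
    convert h6 using 1
    set A : ℝ := V t ^ ((2:ℝ)/μ) with hA
    have hApos : 0 < A := Real.rpow_pos_of_pos hv _
    have e1 : V t ^ (1 - 1/μ) * V t ^ ((1:ℝ)/μ - 1) = 1 := by
      rw [← Real.rpow_add hv]
      norm_num
    have e2 : V t ^ (1 + 1/μ) * V t ^ ((1:ℝ)/μ - 1) = A := by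
      rw [hA, ← Real.rpow_add hv]
      ring_nf
    have e3 : (c * V t ^ ((1:ℝ)/μ)) ^ 2 = k₂ / k₁ * A := by
      rw [hc, mul_pow, sq (V t ^ ((1:ℝ)/μ)), ← Real.rpow_add hv, hA, div_pow,
        Real.sq_sqrt hk₂.le, Real.sq_sqrt hk₁.le]
      ring_nf
    have e4 : (-k₁ * V t ^ (1 - 1/μ) - k₂ * V t ^ (1 + 1/μ)) * ((1:ℝ)/μ) * V t ^ ((1:ℝ)/μ - 1)
        = -(k₁ + k₂ * A) / μ := by
      linear_combination (-k₁/μ) * e1 + (-k₂/μ) * e2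
    rw [e3, e4]
    have hden : (0:ℝ) < 1 + k₂ / k₁ * A := by positivity
    have hsμ : s * μ = c * k₁ := by rw [hs, hck]; field_simp
    have hc' : c = s * μ / k₁ := by rw [eq_div_iff hk₁.ne']; linarith [hsμ]
    have key : c * (-(k₁ + k₂ * A) / μ) = -(s * (1 + k₂ / k₁ * A)) := by
      rw [hc']
      field_simp
    rw [key]
    field_simp
    ring
  have hfeq : f T = f 0 := by
    have hcont : ContinuousOn f (Set.Icc 0 T) := fun t ht =>
      (hderiv t ht).continuousAt.continuousWithinAt
    exact constant_of_has_deriv_right_zero hcont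
      (fun t ht => ((hderiv t (Set.mem_Icc_of_Ico ht)).hasDerivWithinAt)) T
      (Set.right_mem_Icc.mpr hTpos.le)
  have hWT : 0 < c * V T ^ ((1:ℝ)/μ) :=
    mul_pos hcpos (Real.rpow_pos_of_pos (hpos T (Set.right_mem_Icc.mpr hTpos.le)) _)
  have h7 : Real.arctan (c * V T ^ ((1:ℝ)/μ)) + Real.pi / 2
      = Real.arctan (c * V 0 ^ ((1:ℝ)/μ)) := by
    have := hfeq
    rw [hf] at this
    simp only at this
    rw [hsT] at this
    linarith [this]
  have h8 : Real.arctan (c * V 0 ^ ((1:ℝ)/μ)) < Real.pi / 2 := Real.arctan_lt_pi_div_two _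
  have h9 : 0 < Real.arctan (c * V T ^ ((1:ℝ)/μ)) := by
    rw [← Real.arctan_zero]; exact Real.arctan_strictMono hWT
  linarith
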